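/- arXiv:1602.05463 — 2 statements merged into one kernel-verified Lean document; each statement's English description precedes it below -/
import Mathlib

section
/- For integers x, y with gcd(x, y) = 1 and x ≠ y, and a positive integer n, the gcd of x - y and x^{n-1} + x^{n-2}y + ... + x y^{n-2} + y^{n-1} equals the gcd of x - y and n. -/
private theorem int_gcd_add_mul (a b c : ℤ) : Int.gcd a (b + a * c) = Int.gcd a b := by
  apply Nat.dvd_antisymm
  · apply Int.natCast_dvd_natCast.mp
    apply Int.dvd_coe_gcd (Int.gcd_dvd_left _ _)
    have h1 : (Int.gcd a (b + a * c) : ℤ) ∣ a := Int.gcd_dvd_left _ _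
    have h2 : (Int.gcd a (b + a * c) : ℤ) ∣ b + a * c := Int.gcd_dvd_right _ _
    have := h2.sub (h1.mul_right c)
    simpa using this
  · apply Int.natCast_dvd_natCast.mp
    apply Int.dvd_coe_gcd (Int.gcd_dvd_left _ _)
    exact (Int.gcd_dvd_right _ _).add ((Int.gcd_dvd_left _ _).mul_right c)

theorem stmt_2 (x y : ℤ) (h : IsCoprime x y) (hxy : x ≠ y) (n : ℕ) (hn : 0 < n) :
    Int.gcd (x - y) (∑ i ∈ Finset.range n, x ^ i * y ^ (n - 1 - i)) =
      Int.gcd (x - y) (n : ℤ) := by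
  set d := x - y with hd
  have hdvd : d ∣ (∑ i ∈ Finset.range n, x ^ i * y ^ (n - 1 - i)) - n * x ^ (n - 1) := by
    have hsum : (n : ℤ) * x ^ (n - 1) = ∑ i ∈ Finset.range n, x ^ i * x ^ (n - 1 - i) := by
      rw [Finset.sum_congr rfl fun i hi => ?_, Finset.sum_const, Finset.card_range,
        nsmul_eq_mul]
      rw [← pow_add]
      congr 1
      have := Finset.mem_range.mp hi
      omega
    rw [hsum, ← Finset.sum_sub_distrib]
    apply Finset.dvd_sum
    intro i _
    rw [← mul_sub]
    have hdv : d ∣ y ^ (n - 1 - i) - x ^ (n - 1 - i) := by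
      have h2 := sub_dvd_pow_sub_pow y x (n - 1 - i)
      have hyx : y - x = -d := by ring
      rw [hyx, neg_dvd] at h2
      exact h2
    exact hdv.mul_left _
  obtain ⟨k, hk⟩ := hdvd
  have hS : (∑ i ∈ Finset.range n, x ^ i * y ^ (n - 1 - i)) = n * x ^ (n - 1) + d * k := by
    linarith
  rw [hS, int_gcd_add_mul]
  have hcop : IsCoprime d (x ^ (n - 1)) := by
    apply IsCoprime.pow_right
    have h2 : IsCoprime x (-y + x * 1) := (h.neg_right).add_mul_left_right 1
    have h3 : IsCoprime x d := by
      rw [hd]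
      have : -y + x * 1 = x - y := by ring
      rwa [this] at h2
    exact h3.symm
  have h1 : Int.gcd d (x ^ (n - 1)) = 1 := Int.isCoprime_iff_gcd_eq_one.mp hcop
  have hcopn : Nat.Coprime ((x ^ (n - 1)).natAbs) d.natAbs := Nat.Coprime.symm h1
  show Nat.gcd d.natAbs ((n : ℤ) * x ^ (n - 1)).natAbs = _
  rw [Int.natAbs_mul]
  exact hcopn.gcd_mul_right_cancel_right _
end

section
/- Let a, b, n be positive integers with b < a ≤ 2b, and x, y positive integers with y < x ≤ 2y. If |(a/b)^{1/n} - x/y| ≤ 1 then 4^n · |(a/b)^{1/n} - x/y| ≥ |a/b - (x/y)^n|. -/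
theorem stmt_7 (a b n x y : ℕ) (hb : 0 < b) (hba : b < a) (ha2b : a ≤ 2 * b)
    (hn : 0 < n) (hy : 0 < y) (hyx : y < x) (hx2y : x ≤ 2 * y)
    (h : |((a : ℝ) / b) ^ ((1 : ℝ) / n) - (x : ℝ) / y| ≤ 1) :
    |(a : ℝ) / b - ((x : ℝ) / y) ^ n| ≤
      4 ^ n * |((a : ℝ) / b) ^ ((1 : ℝ) / n) - (x : ℝ) / y| := by
  have hb' : (0:ℝ) < b := by exact_mod_cast hb
  have hy' : (0:ℝ) < y := by exact_mod_cast hy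
  set r : ℝ := ((a : ℝ) / b) ^ ((1 : ℝ) / n) with hr
  set s : ℝ := (x : ℝ) / y with hs
  have hab0 : (0:ℝ) ≤ (a:ℝ)/b := by positivity
  have hab2 : (a:ℝ)/b ≤ 2 := by
    rw [div_le_iff₀ hb']
    exact_mod_cast ha2b
  have hr0 : 0 ≤ r := Real.rpow_nonneg hab0 _
  have hr2 : r ≤ 2 := by
    calc r ≤ (2:ℝ) ^ ((1:ℝ)/n) := by
          apply Real.rpow_le_rpow hab0 hab2 (by positivity)
      _ ≤ (2:ℝ) ^ (1:ℝ) := by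
          apply Real.rpow_le_rpow_of_exponent_le (by norm_num)
          rw [div_le_one (by exact_mod_cast hn)]
          exact_mod_cast hn
      _ = 2 := by norm_num
  have hs0 : 0 ≤ s := by positivity
  have hs2 : s ≤ 2 := by
    rw [hs, div_le_iff₀ hy']
    exact_mod_cast hx2y
  have hab : (a:ℝ)/b = r ^ n := by
    rw [hr, ← Real.rpow_natCast (((a : ℝ) / b) ^ ((1 : ℝ) / n)) n,
      ← Real.rpow_mul hab0]
    rw [one_div, inv_mul_cancel₀ (by exact_mod_cast hn.ne' : (n:ℝ) ≠ 0), Real.rpow_one]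
  rw [hab]
  have key : r ^ n - s ^ n = (∑ i ∈ Finset.range n, r ^ i * s ^ (n - 1 - i)) * (r - s) :=
    (geom_sum₂_mul r s n).symm
  rw [key, abs_mul]
  have hsum : |∑ i ∈ Finset.range n, r ^ i * s ^ (n - 1 - i)| ≤ n * 2 ^ (n-1) := by
    calc |∑ i ∈ Finset.range n, r ^ i * s ^ (n - 1 - i)|
        ≤ ∑ i ∈ Finset.range n, |r ^ i * s ^ (n - 1 - i)| := Finset.abs_sum_le_sum_abs _ _
      _ ≤ ∑ i ∈ Finset.range n, (2:ℝ) ^ (n-1) := by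
          apply Finset.sum_le_sum
          intro i hi
          rw [Finset.mem_range] at hi
          have : |r ^ i * s ^ (n - 1 - i)| = r ^ i * s ^ (n - 1 - i) := by
            rw [abs_of_nonneg (by positivity)]
          rw [this]
          calc r ^ i * s ^ (n - 1 - i) ≤ 2 ^ i * 2 ^ (n - 1 - i) := by
                apply mul_le_mul (pow_le_pow_left₀ hr0 hr2 i)
                  (pow_le_pow_left₀ hs0 hs2 _) (by positivity) (by positivity)
            _ = 2 ^ (i + (n - 1 - i)) := (pow_add 2 i _).symm
            _ = 2 ^ (n-1) := by congr 1; omega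
      _ = n * 2 ^ (n-1) := by rw [Finset.sum_const, Finset.card_range, nsmul_eq_mul]
  have hbound : (n:ℝ) * 2 ^ (n-1) ≤ 4 ^ n := by
    have h1 : (n:ℝ) ≤ 2 ^ n := by exact_mod_cast (@Nat.lt_two_pow_self n).le
    have h2 : (2:ℝ) ^ (n-1) ≤ 2 ^ n := pow_le_pow_right₀ (by norm_num) (by omega)
    calc (n:ℝ) * 2 ^ (n-1) ≤ 2 ^ n * 2 ^ n :=
          mul_le_mul h1 h2 (by positivity) (by positivity)
      _ = 4 ^ n := by rw [← mul_pow]; norm_num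
  calc |∑ i ∈ Finset.range n, r ^ i * s ^ (n - 1 - i)| * |r - s|
      ≤ ((n:ℝ) * 2 ^ (n-1)) * |r - s| := by
        apply mul_le_mul_of_nonneg_right hsum (abs_nonneg _)
    _ ≤ 4 ^ n * |r - s| := mul_le_mul_of_nonneg_right hbound (abs_nonneg _)
end
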